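/- Assume that f : ℝ^d → ℝ is continuous and that there is a dense additive subgroup G of ℝ^d and a natural number n such that Δ_h^{n+1} f(x) = 0 for all x, h ∈ G. Then f is an ordinary polynomial. -/

import Mathlib

open Finset Polynomial

/-- The forward difference operator: `(Δ_h f)(x) = f(x + h) - f(x)`. -/
def fdiff {G M : Type*} [Add G] [Sub M] (h : G) (f : G → M) : G → M :=
  fun x => f (x + h) - f x


lemma fdiff_eq {M G : Type*} [AddCommMonoid M] [AddCommGroup G] (h : M) (f : M → G) :
    fdiff h f = fwdDiff h f := rfl

lemma fwdDiff_iter_zero_fun {M G : Type*} [AddCommMonoid M] [AddCommGroup G] (h : M) (k : ℕ) :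
    (fwdDiff h)^[k] (fun _ => (0 : G)) = fun _ => 0 := by
  induction k with
  | zero => rfl
  | succ k ih =>
    rw [Function.iterate_succ_apply,
      show fwdDiff h (fun _ => (0:G)) = fun _ => 0 from funext fun x => sub_self 0, ih]

lemma fwdDiff_iter_ge {M G : Type*} [AddCommMonoid M] [AddCommGroup G] {h : M} {f : M → G}
    {m : ℕ} (hm : (fwdDiff h)^[m] f = fun _ => 0) {j : ℕ} (hj : m ≤ j) :
    (fwdDiff h)^[j] f = fun _ => 0 := by
  obtain ⟨k, rfl⟩ := Nat.exists_eq_add_of_le hj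
  rw [add_comm, Function.iterate_add_apply, hm, fwdDiff_iter_zero_fun]

lemma exists_poly_on_grid (n : ℕ) (g : ℝ → ℝ)
    (H : ∀ h x : ℝ, (fwdDiff h)^[n+1] g x = 0) (y h : ℝ) :
    ∃ q : Polynomial ℝ, q.natDegree ≤ n ∧ ∀ k : ℕ, g (y + k * h) = q.eval (k : ℝ) := by
  set c : ℕ → ℝ := fun j => (fwdDiff h)^[j] g y with hc
  refine ⟨∑ j ∈ range (n+1), Polynomial.C (c j / j.factorial) * descPochhammer ℝ j, ?_, ?_⟩
  · refine Polynomial.natDegree_sum_le_of_forall_le _ _ fun j hj => ?_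
    refine le_trans (Polynomial.natDegree_C_mul_le _ _) ?_
    rw [descPochhammer_natDegree]
    exact Nat.lt_succ_iff.mp (mem_range.mp hj)
  · intro k
    have h0 : g (y + k * h) = ∑ j ∈ range (k+1), k.choose j • ((fwdDiff h)^[j] g y) := by
      have := shift_eq_sum_fwdDiff_iter h g k y
      rwa [nsmul_eq_mul] at this
    have hzero : ∀ j, n + 1 ≤ j → c j = 0 := by
      intro j hj
      have : (fwdDiff h)^[n+1] g = fun _ => 0 := funext fun x => H h x
      rw [hc]
      simp only []
      rw [fwdDiff_iter_ge this hj]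
    have hterm : ∀ j, ((k.choose j : ℝ) * c j) =
        (if j ∈ range (n+1) then (k.choose j : ℝ) * c j else 0) := by
      intro j
      split_ifs with hmem
      · rfl
      · rw [hzero j (by simpa [Nat.lt_succ_iff, not_lt] using (by simpa using hmem : ¬ j < n+1))]
        ring
    have h1 : g (y + k * h) = ∑ j ∈ range (n+1), (k.choose j : ℝ) * c j := by
      rw [h0]
      have e1 : ∑ j ∈ range (k+1), k.choose j • ((fwdDiff h)^[j] g y)
          = ∑ j ∈ range (k+1), (k.choose j : ℝ) * c j := by
        refine sum_congr rfl fun j _ => ?_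
        rw [nsmul_eq_mul]
      rw [e1]
      rcases le_total (k+1) (n+1) with hle | hle
      · rw [← sum_subset (Finset.range_subset_range.mpr hle)]
        intro j _ hj
        rw [Nat.choose_eq_zero_of_lt (by simpa using hj)]
        simp
      · rw [sum_subset (Finset.range_subset_range.mpr hle)]
        intro j _ hj
        rw [hzero j (by simpa using hj)]
        ring
    rw [h1, Polynomial.eval_finset_sum]
    refine sum_congr rfl fun j hj => ?_
    rw [Polynomial.eval_mul, Polynomial.eval_C, descPochhammer_eval_eq_descFactorial,
      Nat.descFactorial_eq_factorial_mul_choose]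
    push_cast
    field_simp

lemma one_dim (n : ℕ) (g : ℝ → ℝ) (hg : Continuous g)
    (H : ∀ h x : ℝ, (fwdDiff h)^[n+1] g x = 0) :
    ∃ q : Polynomial ℝ, q.natDegree ≤ n ∧ ∀ t, g t = q.eval t := by
  obtain ⟨q, hqdeg, hq⟩ := exists_poly_on_grid n g H 0 1
  refine ⟨q, hqdeg, ?_⟩
  have key : Set.EqOn g (fun t => q.eval t) (Set.range ((↑) : ℚ → ℝ)) := by
    rintro _ ⟨r, rfl⟩
    set N : ℕ := r.den with hN
    set m : ℤ := r.num with hm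
    have hNpos : 0 < N := r.pos
    have hN0 : (N : ℝ) ≠ 0 := Nat.cast_ne_zero.mpr hNpos.ne'
    set y : ℝ := -(m.natAbs : ℝ) / N with hy
    set hh : ℝ := 1 / N with hhh
    obtain ⟨q', hq'deg, hq'⟩ := exists_poly_on_grid n g H y hh
    set q2 : Polynomial ℝ := q.comp (Polynomial.C y + Polynomial.C hh * Polynomial.X) with hq2
    have hq2eval : ∀ t : ℝ, q2.eval t = q.eval (y + hh * t) := by
      intro t; simp [hq2]
    have hq2deg : q2.natDegree ≤ n := by
      rw [hq2, Polynomial.natDegree_comp]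
      have h1 : (Polynomial.C y + Polynomial.C hh * Polynomial.X).natDegree ≤ 1 := by
        refine le_trans (Polynomial.natDegree_add_le _ _) ?_
        simp only [Polynomial.natDegree_C, max_le_iff]
        exact ⟨Nat.zero_le _, le_trans (Polynomial.natDegree_C_mul_le _ _)
          Polynomial.natDegree_X_le⟩
      calc q.natDegree * (Polynomial.C y + Polynomial.C hh * Polynomial.X).natDegree
          ≤ n * 1 := Nat.mul_le_mul hqdeg h1
        _ = n := mul_one n
    -- grid points where q' and q2 agree
    have hnode : ∀ j : ℕ, y + ((m.natAbs + j * N : ℕ) : ℝ) * hh = (j : ℝ) := by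
      intro j
      rw [hy, hhh]
      push_cast
      field_simp
      ring
    have hagree : ∀ j : ℕ, q'.eval ((m.natAbs + j * N : ℕ) : ℝ) =
        q2.eval ((m.natAbs + j * N : ℕ) : ℝ) := by
      intro j
      rw [← hq' (m.natAbs + j * N), hq2eval, mul_comm hh, hnode j]
      have := hq j
      rw [zero_add, mul_one] at this
      exact this
    have hq'q2 : q' = q2 := by
      have hsub : q' - q2 = 0 := by
        apply Polynomial.eq_zero_of_natDegree_lt_card_of_eval_eq_zero (q' - q2)
          (f := fun i : Fin (n+1) => ((m.natAbs + (i : ℕ) * N : ℕ) : ℝ))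
        · intro a b hab
          have h2 : (m.natAbs + (a:ℕ) * N : ℕ) = (m.natAbs + (b:ℕ) * N : ℕ) :=
            Nat.cast_injective hab
          have h3 : (a : ℕ) = (b : ℕ) := by
            have := Nat.add_left_cancel h2
            exact Nat.eq_of_mul_eq_mul_right hNpos this
          exact Fin.ext h3
        · intro i
          rw [Polynomial.eval_sub, hagree (i : ℕ), sub_self]
        · rw [Fintype.card_fin]
          exact Nat.lt_succ_of_le (le_trans (Polynomial.natDegree_sub_le _ _)
            (max_le hq'deg hq2deg))
      exact sub_eq_zero.mp hsub
    -- evaluate at the rational point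
    set k0 : ℕ := (m + m.natAbs).toNat with hk0
    have hk0cast : (k0 : ℝ) = (m : ℝ) + (m.natAbs : ℝ) := by
      rw [hk0]
      have hnn : (0 : ℤ) ≤ m + m.natAbs := by omega
      have h4 : ((m + m.natAbs).toNat : ℤ) = m + m.natAbs := Int.toNat_of_nonneg hnn
      calc ((k0:ℕ) : ℝ) = (((k0:ℕ) : ℤ) : ℝ) := by push_cast; ring
        _ = ((m + m.natAbs : ℤ) : ℝ) := congrArg (fun z : ℤ => (z : ℝ)) h4
        _ = (m : ℝ) + (m.natAbs : ℝ) := by push_cast [Nat.cast_natAbs]; ring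
    have hpt : y + (k0 : ℝ) * hh = (r : ℝ) := by
      rw [hy, hhh, hk0cast, Rat.cast_def]
      field_simp
      rw [← hN, ← hm]
      ring
    calc g r = g (y + (k0 : ℝ) * hh) := by rw [hpt]
      _ = q'.eval (k0 : ℝ) := hq' k0
      _ = q2.eval (k0 : ℝ) := by rw [hq'q2]
      _ = q.eval (y + hh * (k0 : ℝ)) := hq2eval _
      _ = q.eval (r : ℝ) := by rw [mul_comm hh, hpt]
  have := Continuous.ext_on Rat.denseRange_cast hg (Polynomial.continuous q) key
  intro t
  exact congrFun this t

lemma iter_transfer {M N G : Type*} [AddCommMonoid M] [AddCommMonoid N] [AddCommGroup G]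
    (f : N → G) (e : M → N) (h : M) (H : N) (he : ∀ x, e (x + h) = e x + H) (m : ℕ) :
    ∀ x, (fwdDiff h)^[m] (fun t => f (e t)) x = (fwdDiff H)^[m] f (e x) := by
  induction m with
  | zero => intro x; rfl
  | succ m ih =>
    intro x
    rw [Function.iterate_succ_apply', Function.iterate_succ_apply']
    show (fwdDiff h)^[m] (fun t => f (e t)) (x + h) - (fwdDiff h)^[m] (fun t => f (e t)) x = _
    rw [ih, ih, he]
    rfl

lemma cons_add_cons {d : ℕ} (a b : ℝ) (y z : Fin d → ℝ) :
    (Fin.cons a y : Fin (d+1) → ℝ) + Fin.cons b z = Fin.cons (a+b) (y+z) := by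
  funext i
  cases i using Fin.cases with
  | zero => simp
  | succ j => simp

lemma cont_cons {d : ℕ} (c : ℝ) :
    Continuous (fun y : Fin d → ℝ => (Fin.cons c y : Fin (d+1) → ℝ)) := by
  apply continuous_pi
  intro i
  cases i using Fin.cases with
  | zero => simpa using continuous_const
  | succ j => simpa using continuous_apply j

lemma cont_cons' {d : ℕ} (y : Fin d → ℝ) :
    Continuous (fun t : ℝ => (Fin.cons t y : Fin (d+1) → ℝ)) := by
  apply continuous_pi
  intro i
  cases i using Fin.cases with
  | zero => simpa using continuous_id'
  | succ j => simpa using continuous_const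

lemma eval_aeval_X0 {d : ℕ} (x : Fin (d+1) → ℝ) (b : Polynomial ℝ) :
    MvPolynomial.eval x (Polynomial.aeval (MvPolynomial.X 0 : MvPolynomial (Fin (d+1)) ℝ) b)
      = b.eval (x 0) := by
  induction b using Polynomial.induction_on with
  | C r => simp
  | add p q hp hq => simp [hp, hq]
  | monomial m r ih => simp

lemma key (n : ℕ) : ∀ (d : ℕ) (f : (Fin d → ℝ) → ℝ), Continuous f →
    (∀ h x : Fin d → ℝ, (fwdDiff h)^[n+1] f x = 0) →
    ∃ P : MvPolynomial (Fin d) ℝ, ∀ x, f x = MvPolynomial.eval x P := by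
  intro d
  induction d with
  | zero =>
    intro f hf H
    refine ⟨MvPolynomial.C (f (fun i => i.elim0)), fun x => ?_⟩
    rw [MvPolynomial.eval_C]
    congr 1
    funext i
    exact i.elim0
  | succ d IH =>
    intro f hf H
    set s : Finset ℕ := Finset.range (n+1) with hs
    set v : ℕ → ℝ := Nat.cast with hv
    have hvs : Set.InjOn v s := fun a _ b _ hab => Nat.cast_injective hab
    have hrep : ∀ (t : ℝ) (y : Fin d → ℝ),
        f (Fin.cons t y) = ∑ j ∈ s, f (Fin.cons (j:ℝ) y) * (Lagrange.basis s v j).eval t := by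
      intro t y
      have hcont : Continuous (fun t : ℝ => f (Fin.cons t y)) := hf.comp (cont_cons' y)
      have hH : ∀ hh t : ℝ, (fwdDiff hh)^[n+1] (fun t => f (Fin.cons t y)) t = 0 := by
        intro hh t
        rw [iter_transfer f (fun t => (Fin.cons t y : Fin (d+1) → ℝ)) hh (Fin.cons hh 0)
          (fun x => by rw [cons_add_cons]; simp)]
        exact H _ _
      obtain ⟨q, hqdeg, hq⟩ := one_dim n _ hcont hH
      have hdeg : q.degree < (s.card : ℕ) := by
        rw [hs, Finset.card_range]
        refine lt_of_le_of_lt (Polynomial.degree_le_natDegree) ?_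
        exact_mod_cast Nat.lt_succ_of_le hqdeg
      have hinterp := Lagrange.eq_interpolate hvs hdeg
      calc f (Fin.cons t y) = q.eval t := hq t
        _ = (Lagrange.interpolate s v fun i => q.eval (v i)).eval t := by rw [← hinterp]
        _ = ∑ j ∈ s, f (Fin.cons (j:ℝ) y) * (Lagrange.basis s v j).eval t := by
            rw [Lagrange.interpolate_apply, Polynomial.eval_finset_sum]
            refine sum_congr rfl fun j hj => ?_
            rw [Polynomial.eval_mul, Polynomial.eval_C, ← hq (v j)]
    have hslice : ∀ j : ℕ, ∃ Q : MvPolynomial (Fin d) ℝ,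
        ∀ y, f (Fin.cons (j:ℝ) y) = MvPolynomial.eval y Q := by
      intro j
      refine IH (fun y => f (Fin.cons (j:ℝ) y)) (hf.comp (cont_cons _)) ?_
      intro h y
      rw [iter_transfer f (fun y => (Fin.cons (j:ℝ) y : Fin (d+1) → ℝ)) h (Fin.cons 0 h)
        (fun x => by rw [cons_add_cons]; simp)]
      exact H _ _
    choose Q hQ using hslice
    refine ⟨∑ j ∈ s, (MvPolynomial.rename Fin.succ (Q j)) *
      Polynomial.aeval (MvPolynomial.X 0) (Lagrange.basis s v j), fun x => ?_⟩
    rw [map_sum]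
    have hx : f x = f (Fin.cons (x 0) (Fin.tail x)) := by rw [Fin.cons_self_tail]
    rw [hx, hrep (x 0) (Fin.tail x)]
    refine sum_congr rfl fun j hj => ?_
    rw [map_mul, eval_aeval_X0, hQ, MvPolynomial.eval_rename]
    rfl


theorem polynomial_of_genPolynomial_on_dense_subgroup {d : ℕ}
    (f : (Fin d → ℝ) → ℝ) (hf : Continuous f)
    (G : AddSubgroup (Fin d → ℝ)) (hG : Dense (G : Set (Fin d → ℝ))) (n : ℕ)
    (hdiff : ∀ x ∈ G, ∀ h ∈ G, (fdiff h)^[n + 1] f x = 0) :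
    ∃ P : MvPolynomial (Fin d) ℝ, ∀ x, f x = MvPolynomial.eval x P := by
  have hformula : ∀ x h : Fin d → ℝ, (fwdDiff h)^[n+1] f x =
      ∑ k ∈ range (n+2), ((-1:ℝ)^(n+1-k) * ((n+1).choose k)) * f (x + (k:ℝ) • h) := by
    intro x h
    rw [fwdDiff_iter_eq_sum_shift]
    refine sum_congr rfl fun k _ => ?_
    rw [zsmul_eq_mul, ← Nat.cast_smul_eq_nsmul ℝ k h]
    push_cast
    ring
  have hcont : Continuous (fun p : (Fin d → ℝ) × (Fin d → ℝ) =>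
      ∑ k ∈ range (n+2), ((-1:ℝ)^(n+1-k) * ((n+1).choose k)) * f (p.1 + (k:ℝ) • p.2)) := by
    refine continuous_finset_sum _ fun k _ => ?_
    exact continuous_const.mul (hf.comp (by fun_prop : Continuous fun p : (Fin d → ℝ) × (Fin d → ℝ) => p.1 + (k:ℝ) • p.2))
  have hzero : (fun p : (Fin d → ℝ) × (Fin d → ℝ) =>
      ∑ k ∈ range (n+2), ((-1:ℝ)^(n+1-k) * ((n+1).choose k)) * f (p.1 + (k:ℝ) • p.2))
      = fun _ => (0:ℝ) := by
    refine Continuous.ext_on (hG.prod hG) hcont continuous_const ?_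
    rintro ⟨x, h⟩ ⟨hx, hh⟩
    show ∑ k ∈ range (n+2), ((-1:ℝ)^(n+1-k) * ((n+1).choose k)) * f (x + (k:ℝ) • h) = 0
    rw [← hformula x h]
    exact hdiff x hx h hh
  have H : ∀ h x : Fin d → ℝ, (fwdDiff h)^[n+1] f x = 0 := by
    intro h x
    rw [hformula x h]
    exact congrFun hzero (x, h)
  exact key n d f hf H
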